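/- Let m ≥ 2 and let a, b be two generating m-tuples (with all entries possibly repeated) of the cyclic group ℤ/m, with tuple length M ≥ 2. Then a and b are Nielsen equivalent; equivalently, for any two surjective homomorphisms p, p' : F_M → ℤ/m from a free group of rank M ≥ 2, there exists an automorphism ψ of F_M with p' ∘ ψ = p. -/

import Mathlib

open FreeGroup Multiplicative

section Gadgets

variable {M : ℕ}

/-- "one into many": `of l ↦ of l * (of i)^(c l)`. -/
private def nhom (i : Fin M) (c : Fin M → ℤ) : FreeGroup (Fin M) →* FreeGroup (Fin M) :=
  FreeGroup.lift fun l => FreeGroup.of l * (FreeGroup.of i) ^ (c l)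

private lemma nhom_of (i : Fin M) (c : Fin M → ℤ) (l : Fin M) :
    nhom i c (of l) = of l * (of i) ^ (c l) := by
  simp [nhom]

/-- `e2 i c` : Nielsen automorphism `of l ↦ of l * (of i)^(c l)` (needs `c i = 0`). -/
private def e2 (i : Fin M) (c : Fin M → ℤ) (hc : c i = 0) : MulAut (FreeGroup (Fin M)) :=
  MonoidHom.toMulEquiv (nhom i c) (nhom i (-c))
    (by
      apply FreeGroup.ext_hom
      intro l
      simp [nhom_of, _root_.map_mul, map_zpow, hc])
    (by
      apply FreeGroup.ext_hom
      intro l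
      simp [nhom_of, _root_.map_mul, map_zpow, hc])

private lemma e2_apply_of (i : Fin M) (c : Fin M → ℤ) (hc : c i = 0) (l : Fin M) :
    (e2 i c hc) (of l) = of l * (of i) ^ (c l) := nhom_of i c l

/-- the word `∏ j, of j ^ c j` (in index order). -/
private def wprod (c : Fin M → ℤ) : FreeGroup (Fin M) :=
  ((List.finRange M).map fun j => FreeGroup.of j ^ c j).prod

/-- "many into one" hom : `of i ↦ of i * w`, other generators fixed. -/
private def mhom (i : Fin M) (w : FreeGroup (Fin M)) : FreeGroup (Fin M) →* FreeGroup (Fin M) :=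
  FreeGroup.lift fun l => if l = i then FreeGroup.of i * w else FreeGroup.of l

private lemma mhom_of (i : Fin M) (w : FreeGroup (Fin M)) (l : Fin M) :
    mhom i w (of l) = if l = i then FreeGroup.of i * w else FreeGroup.of l := by
  simp [mhom]

private lemma mhom_wprod (i : Fin M) (w : FreeGroup (Fin M)) (c : Fin M → ℤ) (hc : c i = 0) :
    mhom i w (wprod c) = wprod c := by
  unfold wprod
  rw [map_list_prod, List.map_map]
  congr 1
  refine List.map_congr_left fun j _ => ?_
  simp only [Function.comp_apply, map_zpow, mhom_of]
  by_cases h : j = i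
  · subst h; rw [hc]; simp
  · simp [h]

/-- `e1 i c` : Nielsen automorphism `of i ↦ of i * ∏ j, of j ^ (c j)` (needs `c i = 0`). -/
private def e1 (i : Fin M) (c : Fin M → ℤ) (hc : c i = 0) : MulAut (FreeGroup (Fin M)) :=
  MonoidHom.toMulEquiv (mhom i (wprod c)) (mhom i (wprod c)⁻¹)
    (by
      apply FreeGroup.ext_hom
      intro l
      by_cases h : l = i
      · subst h
        rw [MonoidHom.comp_apply, mhom_of, if_pos rfl, _root_.map_mul,
          mhom_of, if_pos rfl, mhom_wprod _ _ c hc, MonoidHom.id_apply]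
        group
      · simp [mhom_of, h])
    (by
      apply FreeGroup.ext_hom
      intro l
      by_cases h : l = i
      · subst h
        rw [MonoidHom.comp_apply, mhom_of, if_pos rfl, _root_.map_mul, _root_.map_inv,
          mhom_of, if_pos rfl, mhom_wprod _ _ c hc, MonoidHom.id_apply]
        group
      · simp [mhom_of, h])

private lemma e1_apply_of (i : Fin M) (c : Fin M → ℤ) (hc : c i = 0) (l : Fin M) :
    (e1 i c hc) (of l) = if l = i then FreeGroup.of i * wprod c else FreeGroup.of l :=
  mhom_of i _ l

private lemma map_wprod {m : ℕ} (p : FreeGroup (Fin M) →* Multiplicative (ZMod m))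
    (c : Fin M → ℤ) : Multiplicative.toAdd (p (wprod c)) =
      ∑ j, c j • Multiplicative.toAdd (p (FreeGroup.of j)) := by
  unfold wprod
  rw [map_list_prod, List.map_map]
  simp only [Function.comp_def, map_zpow]
  rw [← Fin.prod_univ_def, toAdd_prod]
  refine Finset.sum_congr rfl fun j _ => ?_
  simp

end Gadgets

/-- key arithmetic: if some `ℤ`-combination `t • a + B = 1` in `ZMod m`, then `a + k * B`
is a unit for a suitable natural number `k`. -/
private lemma exists_unit_combo {m : ℕ} (hm : 2 ≤ m) (a B : ZMod m) (t : ℤ)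
    (h : t • a + B = 1) : ∃ k : ℕ, IsUnit (a + (k : ZMod m) * B) := by
  haveI : NeZero m := ⟨by omega⟩
  set A : ℕ := a.val with hA
  set Bn : ℕ := B.val with hBn
  have hcastA : ((A : ℕ) : ZMod m) = a := ZMod.natCast_zmod_val a
  have hcastB : ((Bn : ℕ) : ZMod m) = B := ZMod.natCast_zmod_val B
  -- the integer congruence
  have hint : (m : ℤ) ∣ (t * A + Bn - 1) := by
    have : ((t * A + Bn - 1 : ℤ) : ZMod m) = 0 := by
      push_cast [hcastA, hcastB]
      rw [← zsmul_eq_mul] at *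
      rw [sub_eq_zero]
      exact_mod_cast h
    exact (ZMod.intCast_zmod_eq_zero_iff_dvd _ m).mp this
  set k : ℕ := ∏ p ∈ m.primeFactors.filter (fun p => ¬ p ∣ A), p with hk
  refine ⟨k, ?_⟩
  have hcast : ((A + k * Bn : ℕ) : ZMod m) = a + (k : ZMod m) * B := by
    push_cast [hcastA, hcastB]; ring
  rw [← hcast, ZMod.isUnit_iff_coprime]
  rw [Nat.coprime_iff_gcd_eq_one]
  by_contra hg
  have hm0 : m ≠ 0 := by omega
  have hgpos : Nat.gcd (A + k * Bn) m ≠ 0 := fun h0 => hm0 (Nat.eq_zero_of_gcd_eq_zero_right h0)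
  set g := Nat.gcd (A + k * Bn) m with hgdef
  have hg1 : g ≠ 1 := hg
  have hg2 : 2 ≤ g := by omega
  set p := g.minFac with hp
  have hpp : p.Prime := Nat.minFac_prime (by omega)
  have hpg : p ∣ g := Nat.minFac_dvd g
  have hpm : p ∣ m := hpg.trans (Nat.gcd_dvd_right _ _)
  have hpAB : p ∣ A + k * Bn := hpg.trans (Nat.gcd_dvd_left _ _)
  -- p cannot divide both A and Bn
  have hnotboth : ¬ (p ∣ A ∧ p ∣ Bn) := by
    rintro ⟨h1, h2⟩
    have : (p : ℤ) ∣ (t * A + Bn - 1) := (Int.natCast_dvd_natCast.mpr hpm).trans hint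
    have h1' : (p : ℤ) ∣ t * A := Dvd.dvd.mul_left (Int.natCast_dvd_natCast.mpr h1) t
    have h2' : (p : ℤ) ∣ (Bn : ℤ) := Int.natCast_dvd_natCast.mpr h2
    have : (p : ℤ) ∣ 1 := by
      have := dvd_sub (dvd_add h1' h2') this
      simpa using this
    have h1 := Int.eq_one_of_dvd_one (by positivity) this
    have h2 := hpp.two_le
    omega
  by_cases hpA : p ∣ A
  · -- then p ∤ Bn and p ∤ k
    have hpBn : ¬ p ∣ Bn := fun hb => hnotboth ⟨hpA, hb⟩
    have hpk : ¬ p ∣ k := by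
      intro hdvd
      rw [hk] at hdvd
      obtain ⟨q, hq, hpq⟩ := hpp.prime.exists_mem_finset_dvd hdvd
      have hq' := Finset.mem_filter.mp hq
      have hqp : q.Prime := (Nat.mem_primeFactors.mp hq'.1).1
      have : p = q := (Nat.prime_dvd_prime_iff_eq hpp hqp).mp hpq
      exact hq'.2 (this ▸ hpA)
    have : p ∣ k * Bn := (Nat.dvd_add_right hpA).mp hpAB
    rcases (Nat.Prime.dvd_mul hpp).mp this with h | h
    · exact hpk h
    · exact hpBn h
  · -- p ∤ A, so p ∣ k
    have hpk : p ∣ k := by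
      rw [hk]
      exact Finset.dvd_prod_of_mem _ (Finset.mem_filter.mpr
        ⟨Nat.mem_primeFactors.mpr ⟨hpp, hpm, hm0⟩, hpA⟩)
    have : p ∣ A := (Nat.dvd_add_right (hpk.mul_right Bn)).mp (by rwa [add_comm] at hpAB)
    exact hpA this

private def NRel {M m : ℕ} (p q : FreeGroup (Fin M) →* Multiplicative (ZMod m)) : Prop :=
  ∃ ψ : MulAut (FreeGroup (Fin M)), p.comp ψ.toMonoidHom = q

private lemma comp_e1_val {M m : ℕ} (q : FreeGroup (Fin M) →* Multiplicative (ZMod m))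
    (i : Fin M) (c : Fin M → ℤ) (hc : c i = 0) (l : Fin M) :
    Multiplicative.toAdd ((q.comp (e1 i c hc).toMonoidHom) (of l)) =
      if l = i then Multiplicative.toAdd (q (of i)) + ∑ j, c j • Multiplicative.toAdd (q (of j))
      else Multiplicative.toAdd (q (of l)) := by
  rw [MonoidHom.comp_apply, MulEquiv.coe_toMonoidHom, e1_apply_of]
  by_cases h : l = i
  · subst h
    rw [if_pos rfl, if_pos rfl, _root_.map_mul, toAdd_mul, map_wprod]
  · simp [h]

private lemma comp_e2_val {M m : ℕ} (q : FreeGroup (Fin M) →* Multiplicative (ZMod m))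
    (i : Fin M) (c : Fin M → ℤ) (hc : c i = 0) (l : Fin M) :
    Multiplicative.toAdd ((q.comp (e2 i c hc).toMonoidHom) (of l)) =
      Multiplicative.toAdd (q (of l)) + c l • Multiplicative.toAdd (q (of i)) := by
  rw [MonoidHom.comp_apply, MulEquiv.coe_toMonoidHom, e2_apply_of]
  simp

private lemma NRel.symm {M m : ℕ} {p q : FreeGroup (Fin M) →* Multiplicative (ZMod m)}
    (h : NRel p q) : NRel q p := by
  obtain ⟨ψ, hψ⟩ := h
  exact ⟨ψ.symm, by rw [← hψ]; ext x; simp⟩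

private lemma NRel.trans {M m : ℕ} {p q r : FreeGroup (Fin M) →* Multiplicative (ZMod m)}
    (h1 : NRel p q) (h2 : NRel q r) : NRel p r := by
  obtain ⟨ψ, hψ⟩ := h1
  obtain ⟨φ, hφ⟩ := h2
  exact ⟨(φ.trans ψ : MulAut _), by rw [← hφ, ← hψ]; ext x; simp⟩

private lemma NRel_comp_aut {M m : ℕ} (p : FreeGroup (Fin M) →* Multiplicative (ZMod m))
    (ψ : MulAut (FreeGroup (Fin M))) : NRel p (p.comp ψ.toMonoidHom) := ⟨ψ, rfl⟩

/-- Every surjection is `NRel`-equivalent to the standard one. -/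
private lemma key {m M : ℕ} (hm : 2 ≤ m) (hM : 2 ≤ M)
    (p : FreeGroup (Fin M) →* Multiplicative (ZMod m)) (hp : Function.Surjective p) :
    ∃ q : FreeGroup (Fin M) →* Multiplicative (ZMod m), NRel p q ∧
      ∀ l : Fin M, q (of l) = if l = (⟨0, by omega⟩ : Fin M) then ofAdd (1 : ZMod m) else 1 := by
  haveI : NeZero m := ⟨by omega⟩
  set i0 : Fin M := ⟨0, by omega⟩ with hi0
  set i1 : Fin M := ⟨1, by omega⟩ with hi1
  have hne : i1 ≠ i0 := by simp [hi0, hi1, Fin.ext_iff]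
  set v : Fin M → ZMod m := fun l => toAdd (p (of l)) with hv
  -- get a linear combination equal to 1
  obtain ⟨c, hc⟩ : ∃ c : Fin M → ℤ, ∑ j, c j • v j = 1 := by
    obtain ⟨g, hg⟩ := hp (ofAdd 1)
    set s : (Fin M → ℤ) →+ ZMod m :=
      AddMonoidHom.mk' (fun c => ∑ j, c j • v j) (by
        intro x y
        simp [add_smul, Finset.sum_add_distrib]) with hs
    set π : FreeGroup (Fin M) →* Multiplicative (Fin M → ℤ) :=
      FreeGroup.lift (fun i => ofAdd (Pi.single i 1)) with hπ
    have hpq : p = (s.toMultiplicative).comp π := by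
      apply FreeGroup.ext_hom
      intro a
      simp only [MonoidHom.comp_apply, hπ, FreeGroup.lift_apply_of]
      have : s (Pi.single a 1) = v a := by
        simp [hs, Pi.single_apply, Finset.sum_ite_eq']
      simp only [AddMonoidHom.toMultiplicative_apply_apply, toAdd_ofAdd, this]
      simp [hv]
    refine ⟨toAdd (π g), ?_⟩
    have := congrArg (fun f => f g) hpq
    simp only [MonoidHom.comp_apply] at this
    rw [hg] at this
    have := congrArg toAdd this.symm
    simpa [hs] using this
  -- abbreviation
  have castval : ∀ x : ZMod m, ((x.val : ℤ) : ZMod m) = x := by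
    intro x
    push_cast [ZMod.natCast_zmod_val]
    rfl
  -- split off the i0 term
  set B : ZMod m := ∑ j ∈ Finset.univ.erase i0, c j • v j with hB
  have hsplit : c i0 • v i0 + B = 1 := by
    rw [hB, Finset.add_sum_erase Finset.univ (fun j => c j • v j) (Finset.mem_univ i0)]
    exact hc
  obtain ⟨k, hk⟩ := exists_unit_combo hm (v i0) B (c i0) hsplit
  set u : ZMod m := v i0 + (k : ZMod m) * B with hu
  -- Step 1 : make the value at i0 a unit
  set c1 : Fin M → ℤ := fun j => if j = i0 then 0 else (k : ℤ) * c j with hc1def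
  have hc1 : c1 i0 = 0 := by simp [hc1def]
  set p1 := p.comp (e1 i0 c1 hc1).toMonoidHom with hp1def
  have hval1 : ∀ l, toAdd (p1 (of l)) = if l = i0 then u else v l := by
    intro l
    rw [hp1def, comp_e1_val]
    by_cases h : l = i0
    · rw [if_pos h, if_pos h]
      have hsum : ∑ j, c1 j • toAdd (p (of j)) = (k : ZMod m) * B := by
        rw [← Finset.add_sum_erase Finset.univ (fun j => c1 j • toAdd (p (of j))) (Finset.mem_univ i0)]
        have h0 : c1 i0 • toAdd (p (of i0)) = 0 := by rw [hc1]; simp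
        rw [h0, zero_add, hB, Finset.mul_sum]
        refine Finset.sum_congr rfl fun j hj => ?_
        have hj' : j ≠ i0 := (Finset.mem_erase.mp hj).1
        rw [hc1def]
        simp only [if_neg hj']
        rw [mul_smul, zsmul_eq_mul, zsmul_eq_mul]
        push_cast
        ring
      rw [hsum, hu]
    · rw [if_neg h, if_neg h]
  -- Step 2 : make the value at i1 equal to 1 - u
  have hui : (↑hk.unit⁻¹ : ZMod m) * u = 1 := hk.val_inv_mul
  set s0 : ZMod m := (1 - u - v i1) * (↑hk.unit⁻¹ : ZMod m) with hs0
  have hs0u : s0 * u = 1 - u - v i1 := by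
    rw [hs0, mul_assoc, hui, mul_one]
  set c2 : Fin M → ℤ := fun l => if l = i1 then (s0.val : ℤ) else 0 with hc2def
  have hc2 : c2 i0 = 0 := by simp [hc2def, (Ne.symm hne)]
  set p2 := p1.comp (e2 i0 c2 hc2).toMonoidHom with hp2def
  have hval2 : ∀ l, toAdd (p2 (of l)) =
      if l = i0 then u else if l = i1 then 1 - u else v l := by
    intro l
    rw [hp2def, comp_e2_val, hval1 l, hval1 i0, if_pos rfl]
    by_cases h : l = i0
    · rw [if_pos h, if_pos h]
      have hz : c2 l = 0 := by rw [h]; exact hc2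
      rw [hz]
      simp
    · rw [if_neg h, if_neg h]
      by_cases h1 : l = i1
      · rw [if_pos h1]
        have hz : c2 l = (s0.val : ℤ) := by simp only [hc2def, if_pos h1]
        rw [hz, zsmul_eq_mul, castval, hs0u]
        have hvl : v l = v i1 := by rw [h1]
        rw [hvl]
        ring
      · rw [if_neg h1]
        have hz : c2 l = 0 := by simp only [hc2def, if_neg h1]
        rw [hz]
        simp
  -- Step 3 : make the value at i0 equal to 1
  set c3 : Fin M → ℤ := fun j => if j = i1 then 1 else 0 with hc3def
  have hc3 : c3 i0 = 0 := by simp [hc3def, (Ne.symm hne)]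
  set p3 := p2.comp (e1 i0 c3 hc3).toMonoidHom with hp3def
  have hval3 : ∀ l, toAdd (p3 (of l)) =
      if l = i0 then 1 else if l = i1 then 1 - u else v l := by
    intro l
    rw [hp3def, comp_e1_val]
    by_cases h : l = i0
    · rw [if_pos h, if_pos h, hval2 i0, if_pos rfl]
      have hsum : ∑ j, c3 j • toAdd (p2 (of j)) = 1 - u := by
        rw [Finset.sum_eq_single i1]
        · have hz : c3 i1 = 1 := by simp only [hc3def, if_pos rfl]
          rw [hz, one_smul, hval2 i1, if_neg hne, if_pos rfl]
        · intro j _ hj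
          have hz : c3 j = 0 := by simp only [hc3def, if_neg hj]
          rw [hz, zero_smul]
        · intro hmem
          exact absurd (Finset.mem_univ i1) hmem
      rw [hsum]
      ring
    · rw [if_neg h, if_neg h, hval2 l, if_neg h]
  -- Step 4 : kill all the other values
  set c4 : Fin M → ℤ := fun l => if l = i0 then 0
    else -(((toAdd (p3 (of l))).val : ℤ)) with hc4def
  have hc4 : c4 i0 = 0 := by simp [hc4def]
  set p4 := p3.comp (e2 i0 c4 hc4).toMonoidHom with hp4def
  have hval4 : ∀ l, toAdd (p4 (of l)) = if l = i0 then 1 else 0 := by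
    intro l
    rw [hp4def, comp_e2_val]
    by_cases h : l = i0
    · rw [if_pos h]
      have hz : c4 l = 0 := by rw [h]; exact hc4
      rw [hz, zero_smul, add_zero, h, hval3 i0, if_pos rfl]
    · rw [if_neg h]
      have hz : c4 l = -(((toAdd (p3 (of l))).val : ℤ)) := by simp only [hc4def, if_neg h]
      rw [hz, hval3 i0, if_pos rfl, neg_zsmul, zsmul_eq_mul, castval, mul_one, add_neg_cancel]
  -- assemble
  refine ⟨p4, ?_, ?_⟩
  · exact ((NRel_comp_aut p _).trans (NRel_comp_aut p1 _)).trans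
      (((NRel_comp_aut p2 _).trans (NRel_comp_aut p3 _)))
  · intro l
    have := hval4 l
    by_cases h : l = i0
    · rw [if_pos h] at this ⊢
      exact toAdd.injective (by rw [this]; rfl)
    · rw [if_neg h] at this ⊢
      exact toAdd.injective (by rw [this]; rfl)


theorem stmt_11 (m M : ℕ) (hm : 2 ≤ m) (hM : 2 ≤ M)
    (p p' : FreeGroup (Fin M) →* Multiplicative (ZMod m))
    (hp : Function.Surjective p) (hp' : Function.Surjective p') :
    ∃ ψ : MulAut (FreeGroup (Fin M)), p'.comp ψ.toMonoidHom = p := by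
  obtain ⟨q, hq, hqval⟩ := key hm hM p hp
  obtain ⟨q', hq', hqval'⟩ := key hm hM p' hp'
  have : q = q' := by
    apply FreeGroup.ext_hom
    intro a
    rw [hqval, hqval']
  exact (hq'.trans (this ▸ hq.symm))
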